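/- Let L be a Leibniz algebra over ℂ, A an automorphism of L, and set P = A − I. Then for all x, y ∈ L and every k ∈ ℕ with k ≥ 1, P^k([x,y]) = Σ_{i=0}^{k} Σ_{j=0}^{i} C(k,i) · C(i,j) · [P^{k−j}(x), P^{k−i+j}(y)]. -/

import Mathlib

open TensorProduct Polynomial Finset


/-- Let `L` be a Leibniz algebra over ℂ, `A` an automorphism of `L`, and
`P = A - I`. Then for all `x y : L` and every `k ≥ 1`,
`P^k [x,y] = ∑_{i=0}^k ∑_{j=0}^i C(k,i) C(i,j) • [P^{k-j} x, P^{k-i+j} y]`. -/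
theorem leibniz_automorphism_P_power_formula
    {L : Type*} [AddCommGroup L] [Module ℂ L]
    (b : L →ₗ[ℂ] L →ₗ[ℂ] L)
    (leib : ∀ x y z : L, b (b x y) z = b (b x z) y + b x (b y z))
    (A : Module.End ℂ L)
    (hbij : Function.Bijective A)
    (hA : ∀ x y : L, A (b x y) = b (A x) (A y))
    (x y : L) (k : ℕ) (hk : 1 ≤ k) :
    ((A - 1) ^ k) (b x y) =
      ∑ i ∈ Finset.range (k + 1), ∑ j ∈ Finset.range (i + 1),
        ((k.choose i : ℂ) * (i.choose j : ℂ)) •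
          b (((A - 1) ^ (k - j)) x) (((A - 1) ^ (k - i + j)) y) := by
  classical
  let e : Module.End ℂ L →ₗ[ℂ] Module.End ℂ L →ₗ[ℂ] L :=
    LinearMap.mk₂ ℂ (fun f g => b (f x) (g y))
    (fun f f' g => by simp) (fun c f g => by simp) (fun f g g' => by simp)
    (fun c f g => by simp)
  let ev : (Module.End ℂ L ⊗[ℂ] Module.End ℂ L) →ₗ[ℂ] L := TensorProduct.lift e
  have hev : ∀ f g : Module.End ℂ L, ev (f ⊗ₜ[ℂ] g) = b (f x) (g y) := fun f g => rfl
  have hAn : ∀ (n : ℕ) (u v : L), (A ^ n) (b u v) = b ((A ^ n) u) ((A ^ n) v) := by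
    intro n
    induction n with
    | zero => intro u v; simp
    | succ n ih =>
      intro u v
      have h0 : (A ^ (n + 1)) (b u v) = (A ^ n) (A (b u v)) := by
        rw [pow_succ, Module.End.mul_apply]
      have h1 : ∀ w : L, (A ^ n) (A w) = (A ^ (n + 1)) w := fun w => by
        rw [pow_succ, Module.End.mul_apply]
      rw [h0, hA, ih, h1, h1]
  have key : ∀ p : ℂ[X],
      (Polynomial.aeval A p) (b x y)
        = ev (Polynomial.aeval (A ⊗ₜ[ℂ] A : Module.End ℂ L ⊗[ℂ] Module.End ℂ L) p) := by
    intro p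
    induction p using Polynomial.induction_on' with
    | add p q hp hq => simp [hp, hq]
    | monomial n c =>
      rw [aeval_monomial, aeval_monomial, Algebra.TensorProduct.tmul_pow,
        ← Algebra.smul_def, ← Algebra.smul_def, map_smul, hev, LinearMap.smul_apply, hAn]
  have hL : ((A - 1) ^ k) (b x y) = ev ((A ⊗ₜ[ℂ] A - 1) ^ k) := by
    have := key ((X - 1) ^ k)
    have h2 : (Polynomial.aeval (A ⊗ₜ[ℂ] A : Module.End ℂ L ⊗[ℂ] Module.End ℂ L)) (((X : ℂ[X]) - 1) ^ k) = (A ⊗ₜ[ℂ] A - 1) ^ k := by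
      rw [← AlgHom.coe_toRingHom, map_pow, map_sub, map_one, AlgHom.coe_toRingHom, aeval_X]
    rw [h2] at this
    simpa using this
  rw [hL]
  set P : Module.End ℂ L := A - 1 with hP
  set u : Module.End ℂ L ⊗[ℂ] Module.End ℂ L := P ⊗ₜ[ℂ] 1 + 1 ⊗ₜ[ℂ] P with hu
  set v : Module.End ℂ L ⊗[ℂ] Module.End ℂ L := P ⊗ₜ[ℂ] P with hv
  have h1 : (A ⊗ₜ[ℂ] A - 1 : Module.End ℂ L ⊗[ℂ] Module.End ℂ L) = u + v := by
    have hAP : A = P + 1 := by rw [hP]; abel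
    rw [hAP, hu, hv, Algebra.TensorProduct.one_def]
    rw [TensorProduct.add_tmul, TensorProduct.tmul_add, TensorProduct.tmul_add]
    abel
  have hcomm : Commute u v := by
    rw [hu, hv]
    simp only [Commute, SemiconjBy, add_mul, mul_add, Algebra.TensorProduct.tmul_mul_tmul,
      one_mul, mul_one]
  have hcomm2 : Commute (P ⊗ₜ[ℂ] (1 : Module.End ℂ L)) ((1 : Module.End ℂ L) ⊗ₜ[ℂ] P) := by
    simp only [Commute, SemiconjBy, Algebra.TensorProduct.tmul_mul_tmul, one_mul, mul_one]
  have hadd : (u + v) ^ k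
      = ∑ i ∈ Finset.range (k + 1), u ^ i * v ^ (k - i) * (k.choose i : _) := by
    refine Commute.add_pow (R := Module.End ℂ L ⊗[ℂ] Module.End ℂ L) ?_ k
    exact hcomm
  rw [h1, hadd, map_sum]
  refine Finset.sum_congr rfl (fun i hi => ?_)
  have hik : i ≤ k := by simpa [Nat.lt_succ_iff] using hi
  have hadd2 : u ^ i
      = ∑ j ∈ Finset.range (i + 1),
          (P ⊗ₜ[ℂ] (1 : Module.End ℂ L)) ^ j * ((1 : Module.End ℂ L) ⊗ₜ[ℂ] P) ^ (i - j)
            * (i.choose j : _) := by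
    refine Commute.add_pow (R := Module.End ℂ L ⊗[ℂ] Module.End ℂ L) ?_ i
    exact hcomm2
  rw [hadd2, Finset.sum_mul, Finset.sum_mul, map_sum]
  refine Eq.trans ?_ (Finset.sum_range_reflect _ (i + 1))
  refine Finset.sum_congr rfl (fun j hj => ?_)
  have hji : j ≤ i := by simpa [Nat.lt_succ_iff] using hj
  -- simplify the tensor expression
  rw [Algebra.TensorProduct.tmul_pow, Algebra.TensorProduct.tmul_pow, hv,
    Algebra.TensorProduct.tmul_pow, one_pow, one_pow,
    Algebra.TensorProduct.tmul_mul_tmul, one_mul, mul_one]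
  have hmid : ((P ^ j) ⊗ₜ[ℂ] (P ^ (i - j)) * (i.choose j : _)) * ((P ^ (k - i)) ⊗ₜ[ℂ] (P ^ (k - i)))
      = ((P ^ j) ⊗ₜ[ℂ] (P ^ (i - j)) * ((P ^ (k - i)) ⊗ₜ[ℂ] (P ^ (k - i)))) * (i.choose j : _) := by
    rw [mul_assoc, (Nat.cast_commute (i.choose j) _).eq, ← mul_assoc]
  rw [hmid, Algebra.TensorProduct.tmul_mul_tmul, ← pow_add, ← pow_add]
  have cast_out : ∀ (n : ℕ) (z : Module.End ℂ L ⊗[ℂ] Module.End ℂ L),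
      ev (z * (n : _)) = (n : ℂ) • ev z := by
    intro n z
    rw [← (Nat.cast_commute n z).eq, ← nsmul_eq_mul, map_nsmul, Nat.cast_smul_eq_nsmul]
  rw [cast_out, cast_out]
  have e2 : i - j + (k - i) = k - j := by omega
  rw [e2]
  have e4 : k - (i + 1 - 1 - j) = j + (k - i) := by omega
  have e5 : k - i + (i + 1 - 1 - j) = k - j := by omega
  have e6 : i.choose (i + 1 - 1 - j) = i.choose j := by
    have h7 : i + 1 - 1 - j = i - j := by omega
    rw [h7, Nat.choose_symm hji]
  rw [e4, e5, e6, hev, smul_smul]
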